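/- Define u₁(ρ) = ρ⁻⁵(1+ρ)^{−1/2}(12 + 6ρ + ρ² + 2ρ³) and u₂(ρ) = ρ⁻⁵(1−ρ)^{−1/2}(12 − 6ρ + ρ² − 2ρ³). Then both u₁ and u₂ solve the ODE (1−ρ²)u″(ρ) + (6/ρ − 9ρ)u′(ρ) − (55/4)u(ρ) = 0 on (0,1), and their Wronskian satisfies u₁(ρ)u₂′(ρ) − u₁′(ρ)u₂(ρ) = 105·ρ⁻⁶(1−ρ²)^{−3/2} for all ρ ∈ (0,1); in particular {u₁, u₂} is a fundamental system of solutions on (0,1). -/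

import Mathlib

/-- The solution `u₁(ρ) = ρ⁻⁵(1+ρ)^(−1/2)(12 + 6ρ + ρ² + 2ρ³)`. -/
noncomputable def w1 (ρ : ℝ) : ℝ :=
  (ρ ^ 5)⁻¹ * (1 + ρ) ^ (-(1 / 2) : ℝ) * (12 + 6 * ρ + ρ ^ 2 + 2 * ρ ^ 3)

/-- The solution `u₂(ρ) = ρ⁻⁵(1−ρ)^(−1/2)(12 − 6ρ + ρ² − 2ρ³)`. -/
noncomputable def w2 (ρ : ℝ) : ℝ :=
  (ρ ^ 5)⁻¹ * (1 - ρ) ^ (-(1 / 2) : ℝ) * (12 - 6 * ρ + ρ ^ 2 - 2 * ρ ^ 3)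

noncomputable def q1 (ρ : ℝ) : ℝ :=
  (-120 - 180 * ρ - 60 * ρ ^ 2 - 15 * ρ ^ 3 - 10 * ρ ^ 4) / (2 * ρ ^ 6 * (1 + ρ))

noncomputable def q2 (ρ : ℝ) : ℝ :=
  (1440 + 3600 * ρ + 2820 * ρ ^ 2 + 750 * ρ ^ 3 + 175 * ρ ^ 4 + 70 * ρ ^ 5) /
    (4 * ρ ^ 7 * (1 + ρ) ^ 2)

noncomputable def r1 (ρ : ℝ) : ℝ :=
  (-120 + 180 * ρ - 60 * ρ ^ 2 + 15 * ρ ^ 3 - 10 * ρ ^ 4) / (2 * ρ ^ 6 * (1 - ρ))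

noncomputable def r2 (ρ : ℝ) : ℝ :=
  (1440 - 3600 * ρ + 2820 * ρ ^ 2 - 750 * ρ ^ 3 + 175 * ρ ^ 4 - 70 * ρ ^ 5) /
    (4 * ρ ^ 7 * (1 - ρ) ^ 2)

lemma hasDerivAt_opr (p : ℝ) {ρ : ℝ} (h : (0:ℝ) < 1 + ρ) :
    HasDerivAt (fun x : ℝ => (1 + x) ^ p) (p * (1 + ρ) ^ (p - 1)) ρ := by
  have h1 : HasDerivAt (fun x : ℝ => 1 + x) 1 ρ := (hasDerivAt_id ρ).const_add 1
  have := (Real.hasDerivAt_rpow_const (x := 1 + ρ) (p := p) (Or.inl (ne_of_gt h))).comp ρ h1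
  exact this.congr_deriv (by ring)

lemma hasDerivAt_omr (p : ℝ) {ρ : ℝ} (h : (0:ℝ) < 1 - ρ) :
    HasDerivAt (fun x : ℝ => (1 - x) ^ p) (-(p * (1 - ρ) ^ (p - 1))) ρ := by
  have h1 : HasDerivAt (fun x : ℝ => 1 - x) (-1) ρ := (hasDerivAt_id ρ).const_sub 1
  have := (Real.hasDerivAt_rpow_const (x := 1 - ρ) (p := p) (Or.inl (ne_of_gt h))).comp ρ h1
  exact this.congr_deriv (by ring)

lemma hasDerivAt_w1 {ρ : ℝ} (hρ : ρ ∈ Set.Ioo (0:ℝ) 1) :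
    HasDerivAt w1 ((1 + ρ) ^ (-(1 / 2) : ℝ) * q1 ρ) ρ := by
  obtain ⟨h0, h1⟩ := hρ
  have hne : ρ ≠ 0 := ne_of_gt h0
  have hop : (0:ℝ) < 1 + ρ := by linarith
  have hf : HasDerivAt (fun x : ℝ => (x ^ 5)⁻¹) (-((5:ℕ) * ρ ^ 4) / (ρ ^ 5) ^ 2) ρ :=
    (hasDerivAt_pow 5 ρ).inv (pow_ne_zero 5 hne)
  have hg := hasDerivAt_opr (-(1/2)) hop
  have hP : HasDerivAt (fun x : ℝ => 12 + 6 * x + x ^ 2 + 2 * x ^ 3)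
      (6 + 2 * ρ + 6 * ρ ^ 2) ρ := by
    have := (((hasDerivAt_const ρ (12:ℝ)).add ((hasDerivAt_id ρ).const_mul 6)).add
      (hasDerivAt_pow 2 ρ)).add ((hasDerivAt_pow 3 ρ).const_mul 2)
    refine this.congr_deriv ?_
    push_cast; ring
  have := (hf.mul hg).mul hP
  refine this.congr_deriv ?_
  have hsub : (1 + ρ) ^ ((-(1/2):ℝ) - 1) = (1 + ρ) ^ (-(1/2):ℝ) / (1 + ρ) := by
    rw [Real.rpow_sub hop, Real.rpow_one]
  rw [hsub]
  simp only [Pi.mul_apply]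
  unfold q1
  have hA : (1 + ρ) ^ (-(1/2):ℝ) ≠ 0 := ne_of_gt (Real.rpow_pos_of_pos hop _)
  field_simp
  ring

lemma hasDerivAt_dw1 {ρ : ℝ} (hρ : ρ ∈ Set.Ioo (0:ℝ) 1) :
    HasDerivAt (fun x : ℝ => (1 + x) ^ (-(1 / 2) : ℝ) * q1 x)
      ((1 + ρ) ^ (-(1 / 2) : ℝ) * q2 ρ) ρ := by
  obtain ⟨h0, h1⟩ := hρ
  have hne : ρ ≠ 0 := ne_of_gt h0
  have hop : (0:ℝ) < 1 + ρ := by linarith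
  have hg := hasDerivAt_opr (-(1/2)) hop
  have hnum : HasDerivAt (fun x : ℝ => -120 - 180 * x - 60 * x ^ 2 - 15 * x ^ 3 - 10 * x ^ 4)
      (-180 - 120 * ρ - 45 * ρ ^ 2 - 40 * ρ ^ 3) ρ := by
    have := ((((hasDerivAt_const ρ (-120:ℝ)).sub ((hasDerivAt_id ρ).const_mul 180)).sub
      ((hasDerivAt_pow 2 ρ).const_mul 60)).sub ((hasDerivAt_pow 3 ρ).const_mul 15)).sub
      ((hasDerivAt_pow 4 ρ).const_mul 10)
    refine this.congr_deriv ?_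
    push_cast; ring
  have hden : HasDerivAt (fun x : ℝ => 2 * x ^ 6 * (1 + x))
      (2 * ((6:ℕ) * ρ ^ 5) * (1 + ρ) + 2 * ρ ^ 6 * 1) ρ :=
    ((hasDerivAt_pow 6 ρ).const_mul 2).mul ((hasDerivAt_id ρ).const_add 1)
  have hdne : 2 * ρ ^ 6 * (1 + ρ) ≠ 0 := by positivity
  have hq : HasDerivAt q1
      (((-180 - 120 * ρ - 45 * ρ ^ 2 - 40 * ρ ^ 3) * (2 * ρ ^ 6 * (1 + ρ)) -
        (-120 - 180 * ρ - 60 * ρ ^ 2 - 15 * ρ ^ 3 - 10 * ρ ^ 4) *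
          (2 * ((6:ℕ) * ρ ^ 5) * (1 + ρ) + 2 * ρ ^ 6 * 1)) / (2 * ρ ^ 6 * (1 + ρ)) ^ 2) ρ :=
    hnum.div hden hdne
  have := hg.mul hq
  refine this.congr_deriv ?_
  have hsub : (1 + ρ) ^ ((-(1/2):ℝ) - 1) = (1 + ρ) ^ (-(1/2):ℝ) / (1 + ρ) := by
    rw [Real.rpow_sub hop, Real.rpow_one]
  rw [hsub]
  unfold q1 q2
  have hA : (1 + ρ) ^ (-(1/2):ℝ) ≠ 0 := ne_of_gt (Real.rpow_pos_of_pos hop _)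
  field_simp
  ring

lemma hasDerivAt_w2 {ρ : ℝ} (hρ : ρ ∈ Set.Ioo (0:ℝ) 1) :
    HasDerivAt w2 ((1 - ρ) ^ (-(1 / 2) : ℝ) * r1 ρ) ρ := by
  obtain ⟨h0, h1⟩ := hρ
  have hne : ρ ≠ 0 := ne_of_gt h0
  have hom : (0:ℝ) < 1 - ρ := by linarith
  have hf : HasDerivAt (fun x : ℝ => (x ^ 5)⁻¹) (-((5:ℕ) * ρ ^ 4) / (ρ ^ 5) ^ 2) ρ :=
    (hasDerivAt_pow 5 ρ).inv (pow_ne_zero 5 hne)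
  have hg := hasDerivAt_omr (-(1/2)) hom
  have hP : HasDerivAt (fun x : ℝ => 12 - 6 * x + x ^ 2 - 2 * x ^ 3)
      (-6 + 2 * ρ - 6 * ρ ^ 2) ρ := by
    have := (((hasDerivAt_const ρ (12:ℝ)).sub ((hasDerivAt_id ρ).const_mul 6)).add
      (hasDerivAt_pow 2 ρ)).sub ((hasDerivAt_pow 3 ρ).const_mul 2)
    refine this.congr_deriv ?_
    push_cast; ring
  have := (hf.mul hg).mul hP
  refine this.congr_deriv ?_
  have hsub : (1 - ρ) ^ ((-(1/2):ℝ) - 1) = (1 - ρ) ^ (-(1/2):ℝ) / (1 - ρ) := by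
    rw [Real.rpow_sub hom, Real.rpow_one]
  rw [hsub]
  simp only [Pi.mul_apply]
  unfold r1
  have hA : (1 - ρ) ^ (-(1/2):ℝ) ≠ 0 := ne_of_gt (Real.rpow_pos_of_pos hom _)
  field_simp
  ring

lemma hasDerivAt_dw2 {ρ : ℝ} (hρ : ρ ∈ Set.Ioo (0:ℝ) 1) :
    HasDerivAt (fun x : ℝ => (1 - x) ^ (-(1 / 2) : ℝ) * r1 x)
      ((1 - ρ) ^ (-(1 / 2) : ℝ) * r2 ρ) ρ := by
  obtain ⟨h0, h1⟩ := hρ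
  have hne : ρ ≠ 0 := ne_of_gt h0
  have hom : (0:ℝ) < 1 - ρ := by linarith
  have hg := hasDerivAt_omr (-(1/2)) hom
  have hnum : HasDerivAt (fun x : ℝ => -120 + 180 * x - 60 * x ^ 2 + 15 * x ^ 3 - 10 * x ^ 4)
      (180 - 120 * ρ + 45 * ρ ^ 2 - 40 * ρ ^ 3) ρ := by
    have := ((((hasDerivAt_const ρ (-120:ℝ)).add ((hasDerivAt_id ρ).const_mul 180)).sub
      ((hasDerivAt_pow 2 ρ).const_mul 60)).add ((hasDerivAt_pow 3 ρ).const_mul 15)).sub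
      ((hasDerivAt_pow 4 ρ).const_mul 10)
    refine this.congr_deriv ?_
    push_cast; ring
  have hden : HasDerivAt (fun x : ℝ => 2 * x ^ 6 * (1 - x))
      (2 * ((6:ℕ) * ρ ^ 5) * (1 - ρ) + 2 * ρ ^ 6 * (-1)) ρ :=
    ((hasDerivAt_pow 6 ρ).const_mul 2).mul ((hasDerivAt_id ρ).const_sub 1)
  have hdne : 2 * ρ ^ 6 * (1 - ρ) ≠ 0 := by positivity
  have hq : HasDerivAt r1
      (((180 - 120 * ρ + 45 * ρ ^ 2 - 40 * ρ ^ 3) * (2 * ρ ^ 6 * (1 - ρ)) -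
        (-120 + 180 * ρ - 60 * ρ ^ 2 + 15 * ρ ^ 3 - 10 * ρ ^ 4) *
          (2 * ((6:ℕ) * ρ ^ 5) * (1 - ρ) + 2 * ρ ^ 6 * (-1))) / (2 * ρ ^ 6 * (1 - ρ)) ^ 2) ρ :=
    hnum.div hden hdne
  have := hg.mul hq
  refine this.congr_deriv ?_
  have hsub : (1 - ρ) ^ ((-(1/2):ℝ) - 1) = (1 - ρ) ^ (-(1/2):ℝ) / (1 - ρ) := by
    rw [Real.rpow_sub hom, Real.rpow_one]
  rw [hsub]
  unfold r1 r2
  have hA : (1 - ρ) ^ (-(1/2):ℝ) ≠ 0 := ne_of_gt (Real.rpow_pos_of_pos hom _)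
  field_simp
  ring

lemma deriv_w1 {ρ : ℝ} (hρ : ρ ∈ Set.Ioo (0:ℝ) 1) :
    deriv w1 ρ = (1 + ρ) ^ (-(1 / 2) : ℝ) * q1 ρ := (hasDerivAt_w1 hρ).deriv

lemma deriv_w2 {ρ : ℝ} (hρ : ρ ∈ Set.Ioo (0:ℝ) 1) :
    deriv w2 ρ = (1 - ρ) ^ (-(1 / 2) : ℝ) * r1 ρ := (hasDerivAt_w2 hρ).deriv

lemma deriv2_w1 {ρ : ℝ} (hρ : ρ ∈ Set.Ioo (0:ℝ) 1) :
    deriv (deriv w1) ρ = (1 + ρ) ^ (-(1 / 2) : ℝ) * q2 ρ := by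
  have hEq : deriv w1 =ᶠ[nhds ρ] fun x : ℝ => (1 + x) ^ (-(1 / 2) : ℝ) * q1 x := by
    filter_upwards [isOpen_Ioo.mem_nhds hρ] with x hx
    exact deriv_w1 hx
  rw [hEq.deriv_eq]
  exact (hasDerivAt_dw1 hρ).deriv

lemma deriv2_w2 {ρ : ℝ} (hρ : ρ ∈ Set.Ioo (0:ℝ) 1) :
    deriv (deriv w2) ρ = (1 - ρ) ^ (-(1 / 2) : ℝ) * r2 ρ := by
  have hEq : deriv w2 =ᶠ[nhds ρ] fun x : ℝ => (1 - x) ^ (-(1 / 2) : ℝ) * r1 x := by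
    filter_upwards [isOpen_Ioo.mem_nhds hρ] with x hx
    exact deriv_w2 hx
  rw [hEq.deriv_eq]
  exact (hasDerivAt_dw2 hρ).deriv

/-- Both `u₁` and `u₂` solve `(1−ρ²)u″ + (6/ρ − 9ρ)u′ − (55/4)u = 0` on `(0,1)`,
with Wronskian `u₁u₂′ − u₁′u₂ = 105ρ⁻⁶(1−ρ²)^(−3/2)`; in particular they form a
fundamental system on `(0,1)`. -/
theorem stmt_18 :
    (∀ ρ ∈ Set.Ioo (0 : ℝ) 1,
      (1 - ρ ^ 2) * deriv (deriv w1) ρ + (6 / ρ - 9 * ρ) * deriv w1 ρ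
        - 55 / 4 * w1 ρ = 0) ∧
    (∀ ρ ∈ Set.Ioo (0 : ℝ) 1,
      (1 - ρ ^ 2) * deriv (deriv w2) ρ + (6 / ρ - 9 * ρ) * deriv w2 ρ
        - 55 / 4 * w2 ρ = 0) ∧
    (∀ ρ ∈ Set.Ioo (0 : ℝ) 1,
      w1 ρ * deriv w2 ρ - deriv w1 ρ * w2 ρ
        = 105 * (ρ ^ 6)⁻¹ * (1 - ρ ^ 2) ^ (-(3 / 2) : ℝ)) := by
  refine ⟨?_, ?_, ?_⟩
  · intro ρ hρ
    obtain ⟨h0, h1⟩ := hρ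
    have hne : ρ ≠ 0 := ne_of_gt h0
    have hop : (0:ℝ) < 1 + ρ := by linarith
    rw [deriv2_w1 ⟨h0, h1⟩, deriv_w1 ⟨h0, h1⟩]
    unfold w1
    have key : (1 - ρ ^ 2) * q2 ρ + (6 / ρ - 9 * ρ) * q1 ρ
        - 55 / 4 * ((ρ ^ 5)⁻¹ * (12 + 6 * ρ + ρ ^ 2 + 2 * ρ ^ 3)) = 0 := by
      unfold q1 q2
      have hop' : (1:ℝ) + ρ ≠ 0 := ne_of_gt hop
      field_simp
      ring
    linear_combination ((1 + ρ) ^ (-(1/2):ℝ)) * key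
  · intro ρ hρ
    obtain ⟨h0, h1⟩ := hρ
    have hne : ρ ≠ 0 := ne_of_gt h0
    have hom : (0:ℝ) < 1 - ρ := by linarith
    rw [deriv2_w2 ⟨h0, h1⟩, deriv_w2 ⟨h0, h1⟩]
    unfold w2
    have key : (1 - ρ ^ 2) * r2 ρ + (6 / ρ - 9 * ρ) * r1 ρ
        - 55 / 4 * ((ρ ^ 5)⁻¹ * (12 - 6 * ρ + ρ ^ 2 - 2 * ρ ^ 3)) = 0 := by
      unfold r1 r2
      have hom' : (1:ℝ) - ρ ≠ 0 := ne_of_gt hom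
      field_simp
      ring
    linear_combination ((1 - ρ) ^ (-(1/2):ℝ)) * key
  · intro ρ hρ
    obtain ⟨h0, h1⟩ := hρ
    have hne : ρ ≠ 0 := ne_of_gt h0
    have hop : (0:ℝ) < 1 + ρ := by linarith
    have hom : (0:ℝ) < 1 - ρ := by linarith
    have hsq : (0:ℝ) < 1 - ρ ^ 2 := by nlinarith
    rw [deriv_w1 ⟨h0, h1⟩, deriv_w2 ⟨h0, h1⟩]
    unfold w1 w2
    have hAB : (1 + ρ) ^ (-(1/2):ℝ) * (1 - ρ) ^ (-(1/2):ℝ) = (1 - ρ ^ 2) ^ (-(1/2):ℝ) := by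
      rw [← Real.mul_rpow (le_of_lt hop) (le_of_lt hom)]
      ring_nf
    have hR : (1 - ρ ^ 2) ^ (-(3/2):ℝ) = (1 - ρ ^ 2) ^ (-(1/2):ℝ) / (1 - ρ ^ 2) := by
      rw [← Real.rpow_sub_one (ne_of_gt hsq)]
      norm_num
    have key : (ρ ^ 5)⁻¹ * (12 + 6 * ρ + ρ ^ 2 + 2 * ρ ^ 3) * r1 ρ -
        q1 ρ * ((ρ ^ 5)⁻¹ * (12 - 6 * ρ + ρ ^ 2 - 2 * ρ ^ 3))
        = 105 * (ρ ^ 6)⁻¹ * (1 - ρ ^ 2)⁻¹ := by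
      unfold q1 r1
      have hop' : (1:ℝ) + ρ ≠ 0 := ne_of_gt hop
      have hom' : (1:ℝ) - ρ ≠ 0 := ne_of_gt hom
      have hsq' : (1:ℝ) - ρ ^ 2 ≠ 0 := ne_of_gt hsq
      field_simp
      ring
    rw [hR, ← hAB]
    linear_combination ((1 + ρ) ^ (-(1/2):ℝ) * (1 - ρ) ^ (-(1/2):ℝ)) * key
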